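/- Let g(t) = ∑_{k≥0} a_k P_k^1(t) generate a continuous isotropic positive definite kernel on S¹ (a_k ≥ 0, ∑ a_k P_k^1(1) < ∞). The kernel (x,y) ↦ g(x·y) is strictly positive definite if and only if for every n and all distinct x₁,…,xₙ ∈ S¹ with polar angles θ₁,…,θₙ, the only real vector c with ∑_μ c_μ e^{i k θ_μ} = 0 for all k with a_k > 0 is c = 0. -/

import Mathlib

open scoped BigOperators Real
open Real Filter

noncomputable section

/-- Gegenbauer polynomial `P_l^m` attached to the parameter `(m-1)/2`,
normalized so that `geg m l 1 = binomial (l+m-2) l` (for `m ≥ 2`). -/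
def geg (m : ℕ) : ℕ → ℝ → ℝ
  | 0, _ => 1
  | 1, t => ((m : ℝ) - 1) * t
  | (n + 2), t =>
      ((2 * (n : ℝ) + (m : ℝ) + 1) * t * geg m (n + 1) t
        - ((n : ℝ) + (m : ℝ) - 1) * geg m n t) / ((n : ℝ) + 2)

/-- Gegenbauer polynomial for `m = 1`: `P_0^1 ≡ 1`, `P_k^1 (cos θ) = (2/k) cos (kθ)`. -/
def geg1 (k : ℕ) (t : ℝ) : ℝ :=
  if k = 0 then 1 else (2 / (k : ℝ)) * Real.cos ((k : ℝ) * Real.arccos t)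

/-- The unit sphere `S^m ⊆ ℝ^{m+1}`. -/
abbrev Sph (m : ℕ) :=
  (Metric.sphere (0 : EuclideanSpace ℝ (Fin (m + 1))) 1 : Set (EuclideanSpace ℝ (Fin (m + 1))))

/-- The dot product of two points of `S^m`. -/
def dotS {m : ℕ} (x y : Sph m) : ℝ :=
  inner ℝ (x : EuclideanSpace ℝ (Fin (m + 1))) (y : EuclideanSpace ℝ (Fin (m + 1)))

lemma geg1_one_pos (k : ℕ) : 0 < geg1 k 1 := by
  unfold geg1
  rcases Nat.eq_zero_or_pos k with h | h
  · simp [h]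
  · simp only [Nat.pos_iff_ne_zero.mp h, if_neg, arccos_one, mul_zero, Real.cos_zero, mul_one]
    positivity

lemma geg1_cos (k : ℕ) (x : ℝ) : geg1 k (Real.cos x) = geg1 k 1 * Real.cos ((k : ℝ) * x) := by
  unfold geg1
  rcases Nat.eq_zero_or_pos k with h | h
  · simp [h]
  · have hk := Nat.pos_iff_ne_zero.mp h
    simp only [hk, if_neg, arccos_one, mul_zero, Real.cos_zero, mul_one]
    have h1 : Real.cos ((k : ℝ) * Real.arccos (Real.cos x)) =
        (Polynomial.Chebyshev.T ℝ (k : ℤ)).eval (Real.cos (Real.arccos (Real.cos x))) := by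
      rw [Polynomial.Chebyshev.T_real_cos]; norm_num
    rw [h1, Real.cos_arccos (neg_one_le_cos x) (cos_le_one x),
      Polynomial.Chebyshev.T_real_cos]
    norm_num

lemma geg1_abs_le (k : ℕ) (x : ℝ) : |geg1 k (Real.cos x)| ≤ geg1 k 1 := by
  rw [geg1_cos, abs_mul, abs_of_pos (geg1_one_pos k)]
  calc geg1 k 1 * |Real.cos ((k:ℝ)*x)| ≤ geg1 k 1 * 1 :=
        mul_le_mul_of_nonneg_left (abs_cos_le_one _) (geg1_one_pos k).le
    _ = geg1 k 1 := mul_one _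

lemma key_id {n : ℕ} (k : ℕ) (θ c : Fin n → ℝ) :
    ∑ i, ∑ j, c i * c j * geg1 k (Real.cos (θ i - θ j)) =
      geg1 k 1 * ((∑ i, c i * Real.cos ((k:ℝ) * θ i))^2
        + (∑ i, c i * Real.sin ((k:ℝ) * θ i))^2) := by
  have hpt : ∀ i j : Fin n, c i * c j * geg1 k (Real.cos (θ i - θ j)) =
      geg1 k 1 * ((c i * Real.cos ((k:ℝ)*θ i)) * (c j * Real.cos ((k:ℝ)*θ j))
        + (c i * Real.sin ((k:ℝ)*θ i)) * (c j * Real.sin ((k:ℝ)*θ j))) := by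
    intro i j
    rw [geg1_cos, mul_sub, Real.cos_sub]
    ring
  calc ∑ i, ∑ j, c i * c j * geg1 k (Real.cos (θ i - θ j))
      = ∑ i, ∑ j, geg1 k 1 * ((c i * Real.cos ((k:ℝ)*θ i)) * (c j * Real.cos ((k:ℝ)*θ j))
          + (c i * Real.sin ((k:ℝ)*θ i)) * (c j * Real.sin ((k:ℝ)*θ j))) :=
        Finset.sum_congr rfl fun i _ => Finset.sum_congr rfl fun j _ => hpt i j
    _ = geg1 k 1 * ((∑ i, c i * Real.cos ((k:ℝ) * θ i))^2
          + (∑ i, c i * Real.sin ((k:ℝ) * θ i))^2) := by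
        rw [sq, sq, Finset.sum_mul_sum, Finset.sum_mul_sum]
        simp only [Finset.mul_sum, ← Finset.sum_add_distrib]

lemma summable_geg1 {a : ℕ → ℝ} (ha : ∀ k, 0 ≤ a k)
    (hsum : Summable fun k => a k * geg1 k 1) (x : ℝ) :
    Summable fun k => a k * geg1 k (Real.cos x) := by
  refine Summable.of_norm_bounded hsum fun k => ?_
  rw [Real.norm_eq_abs, abs_mul, abs_of_nonneg (ha k)]
  exact mul_le_mul_of_nonneg_left (geg1_abs_le k x) (ha k)

lemma Qform (a : ℕ → ℝ) (ha : ∀ k, 0 ≤ a k)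
    (hsum : Summable fun k => a k * geg1 k 1)
    (g : ℝ → ℝ) (hg : ∀ t, g t = ∑' k, a k * geg1 k t) {n : ℕ} (θ c : Fin n → ℝ) :
    ∑ i, ∑ j, c i * c j * g (Real.cos (θ i - θ j))
      = ∑' k, a k * (geg1 k 1 * ((∑ i, c i * Real.cos ((k:ℝ)*θ i))^2
          + (∑ i, c i * Real.sin ((k:ℝ)*θ i))^2)) := by
  have hsm : ∀ (i j : Fin n), Summable fun k =>
      c i * c j * (a k * geg1 k (Real.cos (θ i - θ j))) :=
    fun i j => (summable_geg1 ha hsum _).mul_left _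
  calc ∑ i, ∑ j, c i * c j * g (Real.cos (θ i - θ j))
      = ∑ i, ∑ j, ∑' k, c i * c j * (a k * geg1 k (Real.cos (θ i - θ j))) := by
        refine Finset.sum_congr rfl fun i _ => Finset.sum_congr rfl fun j _ => ?_
        rw [hg, tsum_mul_left]
    _ = ∑ i, ∑' k, ∑ j, c i * c j * (a k * geg1 k (Real.cos (θ i - θ j))) := by
        refine Finset.sum_congr rfl fun i _ => ?_
        exact (Summable.tsum_finsetSum (fun j _ => hsm i j)).symm
    _ = ∑' k, ∑ i, ∑ j, c i * c j * (a k * geg1 k (Real.cos (θ i - θ j))) := by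
        exact (Summable.tsum_finsetSum (fun i _ => summable_sum (fun j _ => hsm i j))).symm
    _ = ∑' k, a k * (geg1 k 1 * ((∑ i, c i * Real.cos ((k:ℝ)*θ i))^2
          + (∑ i, c i * Real.sin ((k:ℝ)*θ i))^2)) := by
        refine tsum_congr fun k => ?_
        rw [← key_id k θ c, Finset.mul_sum]
        refine Finset.sum_congr rfl fun i _ => ?_
        rw [Finset.mul_sum]
        exact Finset.sum_congr rfl fun j _ => by ring

lemma exp_sum_eq {n : ℕ} (k : ℕ) (θ c : Fin n → ℝ) :
    (∑ μ, (c μ : ℂ) * Complex.exp (Complex.I * (k : ℂ) * ((θ μ : ℝ) : ℂ)) = 0) ↔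
      ((∑ i, c i * Real.cos ((k:ℝ)*θ i)) = 0 ∧ (∑ i, c i * Real.sin ((k:ℝ)*θ i)) = 0) := by
  have hS : ∑ μ, (c μ : ℂ) * Complex.exp (Complex.I * (k : ℂ) * ((θ μ : ℝ) : ℂ))
      = ((∑ i, c i * Real.cos ((k:ℝ)*θ i) : ℝ) : ℂ)
        + ((∑ i, c i * Real.sin ((k:ℝ)*θ i) : ℝ) : ℂ) * Complex.I := by
    push_cast
    rw [Finset.sum_mul, ← Finset.sum_add_distrib]
    refine Finset.sum_congr rfl fun μ _ => ?_
    rw [show Complex.I * (k:ℂ) * ((θ μ : ℝ) : ℂ) = (((k:ℝ) * θ μ : ℝ) : ℂ) * Complex.I by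
      push_cast; ring, Complex.exp_mul_I]
    push_cast
    ring
  rw [hS]
  rw [Complex.ext_iff]
  simp only [Complex.add_re, Complex.ofReal_re, Complex.mul_re, Complex.I_re,
    Complex.ofReal_im, Complex.I_im, Complex.add_im, Complex.mul_im, Complex.zero_re,
    Complex.zero_im, mul_zero, mul_one, zero_mul, sub_zero, add_zero, zero_add]

/-- Lemma 2.3: the continuous isotropic positive definite kernel generated on `S¹` by
`g(t) = ∑_k a_k P_k^1(t)` is strictly positive definite iff for all distinct points of
`S¹` with polar angles `θ₁,…,θₙ ∈ [0,2π)`, the only real vector `c` with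
`∑_μ c_μ e^{ikθ_μ} = 0` for all `k` with `a_k > 0` is `c = 0`. -/
theorem stmt12 (a : ℕ → ℝ) (ha : ∀ k, 0 ≤ a k)
    (hsum : Summable fun k => a k * geg1 k 1)
    (g : ℝ → ℝ) (hg : ∀ t, g t = ∑' k, a k * geg1 k t) :
    (∀ (n : ℕ) (θ : Fin n → ℝ), (∀ μ, θ μ ∈ Set.Ico (0 : ℝ) (2 * Real.pi)) →
      Function.Injective θ →
      ∀ c : Fin n → ℝ, c ≠ 0 → 0 < ∑ i, ∑ j, c i * c j * g (Real.cos (θ i - θ j))) ↔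
    (∀ (n : ℕ) (θ : Fin n → ℝ), (∀ μ, θ μ ∈ Set.Ico (0 : ℝ) (2 * Real.pi)) →
      Function.Injective θ →
      ∀ c : Fin n → ℝ,
        (∀ k : ℕ, 0 < a k →
          ∑ μ, (c μ : ℂ) * Complex.exp (Complex.I * (k : ℂ) * ((θ μ : ℝ) : ℂ)) = 0) →
        c = 0) := by
  constructor
  · intro hspd n θ hθ hinj c hc
    by_contra hc0
    have hQ := hspd n θ hθ hinj c hc0
    rw [Qform a ha hsum g hg θ c] at hQ
    have hzero : ∀ k : ℕ, a k * (geg1 k 1 * ((∑ i, c i * Real.cos ((k:ℝ)*θ i))^2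
        + (∑ i, c i * Real.sin ((k:ℝ)*θ i))^2)) = 0 := by
      intro k
      rcases eq_or_lt_of_le (ha k) with h | h
      · rw [← h, zero_mul]
      · obtain ⟨hA, hB⟩ := (exp_sum_eq k θ c).mp (hc k h)
        rw [hA, hB]
        ring
    rw [tsum_congr hzero, tsum_zero] at hQ
    exact lt_irrefl 0 hQ
  · intro hcond n θ hθ hinj c hc0
    set A : ℕ → ℝ := fun k => ∑ i, c i * Real.cos ((k:ℝ)*θ i) with hA
    set B : ℕ → ℝ := fun k => ∑ i, c i * Real.sin ((k:ℝ)*θ i) with hB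
    set F : ℕ → ℝ := fun k => a k * (geg1 k 1 * ((A k)^2 + (B k)^2)) with hFdef
    have hQ : ∑ i, ∑ j, c i * c j * g (Real.cos (θ i - θ j)) = ∑' k, F k :=
      Qform a ha hsum g hg θ c
    have hFnn : ∀ k, 0 ≤ F k := fun k =>
      mul_nonneg (ha k) (mul_nonneg (geg1_one_pos k).le (by positivity))
    have hFs : Summable F := by
      refine Summable.of_nonneg_of_le hFnn (fun k => ?_)
        (hsum.mul_right (2 * (∑ i, |c i|)^2))
      have hbd : ∀ (f : Fin n → ℝ), (∀ i, |f i| ≤ 1) →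
          (∑ i, c i * f i)^2 ≤ (∑ i, |c i|)^2 := by
        intro f hf
        rw [← sq_abs]
        refine pow_le_pow_left₀ (abs_nonneg _) ?_ 2
        refine (Finset.abs_sum_le_sum_abs _ _).trans (Finset.sum_le_sum fun i _ => ?_)
        rw [abs_mul]
        calc |c i| * |f i| ≤ |c i| * 1 := mul_le_mul_of_nonneg_left (hf i) (abs_nonneg _)
          _ = |c i| := mul_one _
      have h1 : (A k)^2 ≤ (∑ i, |c i|)^2 := hbd _ fun i => abs_cos_le_one _
      have h2 : (B k)^2 ≤ (∑ i, |c i|)^2 := hbd _ fun i => abs_sin_le_one _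
      calc F k = (a k * geg1 k 1) * ((A k)^2 + (B k)^2) := by rw [hFdef]; ring
        _ ≤ (a k * geg1 k 1) * (2 * (∑ i, |c i|)^2) := by
            refine mul_le_mul_of_nonneg_left ?_ (mul_nonneg (ha k) (geg1_one_pos k).le)
            nlinarith
        _ = a k * geg1 k 1 * (2 * (∑ i, |c i|)^2) := rfl
    rw [hQ]
    rcases lt_or_eq_of_le (tsum_nonneg hFnn) with h | h
    · exact h
    · exfalso
      refine hc0 (hcond n θ hθ hinj c fun k hk => ?_)
      have hFk : F k = 0 := by
        refine le_antisymm ?_ (hFnn k)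
        rw [h]
        exact Summable.le_tsum hFs k fun j _ => hFnn j
      have hAB : (A k)^2 + (B k)^2 = 0 := by
        have h1 : 0 < a k * geg1 k 1 := mul_pos hk (geg1_one_pos k)
        have h2 : a k * geg1 k 1 * ((A k)^2 + (B k)^2) = 0 := by
          rw [← hFk, hFdef]; ring
        exact (mul_eq_zero.mp h2).resolve_left (ne_of_gt h1)
      rw [exp_sum_eq k θ c]
      constructor <;> nlinarith [sq_nonneg (A k), sq_nonneg (B k)]
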